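/- Let R be a perfect commutative ring of characteristic p (the Frobenius x ↦ x^p is bijective). For the twisted Laurent polynomial ring R[F^{±1}] (with F·a = a^p·F), left multiplication by F−1 on R[F^{±1}] is injective, and the quotient R[F^{±1}]/R[F^{±1}]·(F−1) is isomorphic to R as a left R-module, i.e., there is a short exact sequence 0 → R[F^{±1}] →(F−1)· R[F^{±1}] → R → 0 of right R[F^{±1}]-modules. -/

import Mathlib

/-- The `i`-th integer power of the Frobenius automorphism of a perfect ring. -/
noncomputable def phiZ (p : ℕ) (R : Type*) [CommRing R] [Fact p.Prime] [CharP R p]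
    [PerfectRing R p] (i : ℤ) : R ≃+* R :=
  ((frobeniusEquiv R p : RingAut R) ^ i : RingAut R)

section aux
variable (p : ℕ) (R : Type*) [CommRing R] [Fact p.Prime] [CharP R p] [PerfectRing R p]

lemma phiZ_apply_phiZ (i j : ℤ) (a : R) : phiZ p R i (phiZ p R j a) = phiZ p R (i + j) a := by
  simp only [phiZ, zpow_add]
  rfl

lemma phiZ_one_apply (a : R) : phiZ p R 1 a = a ^ p := by
  simp [phiZ, frobenius_def]

lemma phiZ_zero_apply (a : R) : phiZ p R 0 a = a := by
  simp only [phiZ, zpow_zero]; rfl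

lemma phiZ_pow_p (i : ℤ) (a : R) : phiZ p R i (a ^ p) = phiZ p R (i + 1) a := by
  rw [← phiZ_one_apply p R a, phiZ_apply_phiZ]

/-- If the coefficients of a finitely supported function satisfy `c (j+1) = (c j)^p`,
then `c = 0`. -/
lemma finsupp_zero_of_rec (c : ℤ →₀ R) (h : ∀ j : ℤ, c (j + 1) = c j ^ p) : c = 0 := by
  have hp0 : p ≠ 0 := (Fact.out : p.Prime).ne_zero
  ext i
  by_cases hne : c.support.Nonempty
  · set m := c.support.min' hne with hm
    have hlow : ∀ j : ℤ, j < m → c j = 0 := by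
      intro j hj
      by_contra hcj
      exact absurd (Finset.min'_le _ _ (Finsupp.mem_support_iff.mpr hcj)) (not_le.mpr hj)
    have key : ∀ n : ℕ, c (m - 1 + n) = 0 := by
      intro n
      induction n with
      | zero => simpa using hlow (m - 1) (by omega)
      | succ k ih =>
        have hcast : (m - 1 + (k + 1 : ℕ) : ℤ) = (m - 1 + k) + 1 := by push_cast; ring
        rw [hcast, h, ih, zero_pow hp0]
    by_cases hi : i < m
    · simp [hlow i hi]
    · have h1 : i = (m - 1) + ((i - (m - 1)).toNat : ℤ) := by omega
      rw [h1]
      exact key _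
  · simp [Finsupp.notMem_support_iff.mp (fun hx => hne ⟨i, hx⟩)]

end aux


/-- Let `R` be a perfect commutative ring of characteristic `p`.  We encode the
twisted Laurent polynomial ring `R[F^{±1}]` abstractly: a ring `A`, a ring map `ι : R → A`,
and a unit `u` (playing the role of `F`) with `F·a = a^p·F`, such that `A` is free as a left
`R`-module on the powers `F^i, i ∈ ℤ`.  The map `π : A → R`, `Σ aᵢ F^i ↦ Σ aᵢ^{p^{-i}}`, is
hypothesized via its defining property.  Conclusion: left multiplication by `F - 1` is
injective, `π` is surjective, and `ker π` is exactly the image of left multiplication by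
`F - 1`; i.e. `0 → R[F^{±1}] →(F−1)· R[F^{±1}] →π R → 0` is a short exact sequence. -/
theorem stmt1 (p : ℕ) [Fact p.Prime] (R : Type*) [CommRing R] [CharP R p] [PerfectRing R p]
    (A : Type*) [Ring A] (ι : R →+* A) (u : Aˣ)
    (hcomm : ∀ a : R, (u : A) * ι a = ι (a ^ p) * u)
    (hbasis : Function.Bijective fun c : ℤ →₀ R => c.sum fun i a => ι a * ((u ^ i : Aˣ) : A))
    (π : A →+ R)
    (hπ : ∀ (a : R) (i : ℤ), π (ι a * ((u ^ i : Aˣ) : A)) = phiZ p R (-i) a) :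
    Function.Injective (fun x : A => ((u : A) - 1) * x) ∧
    Function.Surjective π ∧
    (∀ x : A, π x = 0 ↔ ∃ y : A, x = ((u : A) - 1) * y) := by
  have hp0 : p ≠ 0 := (Fact.out : p.Prime).ne_zero
  set e : (ℤ →₀ R) → A := fun c => c.sum fun i a => ι a * ((u ^ i : Aˣ) : A) with he
  -- shift operation on coefficients
  set shift : (ℤ →₀ R) → (ℤ →₀ R) :=
    fun c => Finsupp.mapDomain (· + 1) (Finsupp.mapRange (· ^ p) (zero_pow hp0) c) with hs
  have hinj1 : Function.Injective (· + (1 : ℤ)) := add_left_injective 1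
  -- sums over shifted coefficients
  have hshift_sum : ∀ (c : ℤ →₀ R) (M : Type _) [AddCommMonoid M] (h : ℤ → R → M)
      (h0 : ∀ i, h i 0 = 0), (shift c).sum h = c.sum fun i a => h (i + 1) (a ^ p) := by
    intro c M _ h h0
    rw [hs]
    rw [Finsupp.sum_mapDomain_index_inj hinj1, Finsupp.sum_mapRange_index (fun i => h0 _)]
  have hshift_sumR : ∀ (c : ℤ →₀ R) (h : ℤ → R → R) (h0 : ∀ i, h i 0 = 0),
      (shift c).sum h = c.sum fun i a => h (i + 1) (a ^ p) := by
    intro c h h0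
    rw [hs]
    rw [Finsupp.sum_mapDomain_index_inj hinj1, Finsupp.sum_mapRange_index (fun i => h0 _)]
  -- key multiplication identity
  have hkey : ∀ (b : R) (j : ℤ),
      (u : A) * (ι b * ((u ^ j : Aˣ) : A)) = ι (b ^ p) * ((u ^ (j + 1) : Aˣ) : A) := by
    intro b j
    rw [← mul_assoc, hcomm, mul_assoc]
    congr 1
    rw [← Units.val_mul, ← zpow_one_add, add_comm]
  have hu_mul : ∀ c : ℤ →₀ R, (u : A) * e c = e (shift c) := by
    intro c
    show (u : A) * (c.sum fun i a => ι a * ((u ^ i : Aˣ) : A)) =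
      (shift c).sum fun i a => ι a * ((u ^ i : Aˣ) : A)
    rw [hshift_sum c A (fun i a => ι a * ((u ^ i : Aˣ) : A)) (by simp), Finsupp.mul_sum]
    exact Finsupp.sum_congr fun i _ => hkey _ _
  have hπe : ∀ c : ℤ →₀ R, π (e c) = c.sum fun i a => phiZ p R (-i) a := by
    intro c
    show π (c.sum fun i a => ι a * ((u ^ i : Aˣ) : A)) = _
    rw [map_finsuppSum]
    exact Finsupp.sum_congr fun i _ => hπ _ _
  -- injectivity
  have hinj : ∀ z : A, ((u : A) - 1) * z = 0 → z = 0 := by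
    intro z hz
    obtain ⟨c, rfl⟩ := hbasis.2 z
    have h1 : e (shift c) = e c := by
      rw [sub_mul, one_mul, sub_eq_zero, hu_mul] at hz
      exact hz
    have h2 : shift c = c := hbasis.1 h1
    have h3 : ∀ j : ℤ, c (j + 1) = c j ^ p := by
      intro j
      conv_lhs => rw [← h2]
      rw [hs]
      simp only
      rw [show (j + 1 : ℤ) = (fun x => x + 1) j from rfl,
        Finsupp.mapDomain_apply hinj1, Finsupp.mapRange_apply]
    rw [finsupp_zero_of_rec p R c h3]
    show (0 : ℤ →₀ R).sum (fun i a => ι a * ((u ^ i : Aˣ) : A)) = 0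
    simp
  -- the range of left multiplication by u - 1
  set S : AddSubgroup A := (AddMonoidHom.mulLeft ((u : A) - 1)).range with hS
  have hmemS : ∀ x : A, x ∈ S ↔ ∃ y : A, ((u : A) - 1) * y = x := by
    intro x
    simp [hS, AddMonoidHom.mem_range, AddMonoidHom.coe_mulLeft]
  have hstep : ∀ (b : R) (j : ℤ),
      ι (b ^ p) * ((u ^ (j + 1) : Aˣ) : A) - ι b * ((u ^ j : Aˣ) : A) ∈ S := by
    intro b j
    rw [hmemS]
    refine ⟨ι b * ((u ^ j : Aˣ) : A), ?_⟩
    rw [sub_mul, one_mul, hkey]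
  have L : ∀ (i : ℤ) (a : R), ι a * ((u ^ i : Aˣ) : A) - ι (phiZ p R (-i) a) ∈ S := by
    intro i
    induction i using Int.induction_on with
    | zero =>
      intro a
      simp only [zpow_zero, Units.val_one, mul_one, neg_zero, phiZ_zero_apply, sub_self]
      exact zero_mem S
    | succ i ih =>
      intro a
      set b := phiZ p R (-1) a with hb
      have hbp : b ^ p = a := by
        rw [hb, ← phiZ_one_apply p R, phiZ_apply_phiZ]
        norm_num
        rw [phiZ_zero_apply]
      have h1 := hstep b i
      have h2 := ih b
      have h3 := add_mem h1 h2
      rw [sub_add_sub_cancel, hbp] at h3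
      have h4 : phiZ p R (-(i : ℤ)) b = phiZ p R (-((i : ℤ) + 1)) a := by
        rw [hb, phiZ_apply_phiZ]
        congr 1
        ring
      rwa [h4] at h3
    | pred i ih =>
      intro a
      have h1 := hstep a (-(i : ℤ) - 1)
      have h2 := ih (a ^ p)
      rw [show (-(i : ℤ) - 1 + 1) = -(i : ℤ) by ring] at h1
      have h3 := sub_mem h2 h1
      rw [sub_sub_sub_cancel_left] at h3
      have h4 : phiZ p R (-(-(i : ℤ))) (a ^ p) = phiZ p R (-(-(i : ℤ) - 1)) a := by
        rw [phiZ_pow_p]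
        congr 1
        ring
      rwa [h4] at h3
  have C : ∀ x : A, x - ι (π x) ∈ S := by
    intro x
    obtain ⟨c, rfl⟩ := hbasis.2 x
    rw [hπe, map_finsuppSum]
    have hec : e c = c.sum fun i a => ι a * ((u ^ i : Aˣ) : A) := rfl
    rw [hec, ← Finsupp.sum_sub, Finsupp.sum]
    exact sum_mem fun i _ => L i (c i)
  have hvanish : ∀ y : A, π (((u : A) - 1) * y) = 0 := by
    intro y
    obtain ⟨c, rfl⟩ := hbasis.2 y
    rw [sub_mul, one_mul, hu_mul, map_sub, hπe, hπe,
      hshift_sumR c (fun i a => phiZ p R (-i) a) (by simp)]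
    have heq : (c.sum fun i a => phiZ p R (-(i + 1)) (a ^ p)) =
        c.sum fun i a => phiZ p R (-i) a := by
      apply Finsupp.sum_congr
      intro i _
      rw [phiZ_pow_p]
      congr 1
      ring
    rw [heq, sub_self]
  refine ⟨?_, ?_, ?_⟩
  · intro x y hxy
    simp only at hxy
    have : ((u : A) - 1) * (x - y) = 0 := by rw [mul_sub, hxy, sub_self]
    exact sub_eq_zero.mp (hinj _ this)
  · intro r
    refine ⟨ι r * ((u ^ (0 : ℤ) : Aˣ) : A), ?_⟩
    rw [hπ]
    simp [phiZ_zero_apply]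
  · intro x
    constructor
    · intro h
      have hC := C x
      rw [h, map_zero, sub_zero, hmemS] at hC
      obtain ⟨y, hy⟩ := hC
      exact ⟨y, hy.symm⟩
    · rintro ⟨y, rfl⟩
      exact hvanish y
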